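/- Let s ≥ 1, 0 ≤ T ≤ s+1, c ∈ ℂ, R > 0, and let a_1, …, a_{s+1} ∈ ℂ (not necessarily distinct) satisfy |a_j − c| < R for 1 ≤ j ≤ T and |a_j − c| > R for T+1 ≤ j ≤ s+1. Then (1/(2πi)) ∮_{|z−c|=R} dz / ∏_{j=1}^{s+1} (z − a_j) = (−1)^{T+1} · Σ_L w(L), where the sum ranges over all compositions L of s of length T; in particular the integral vanishes when T = 0 or T = s+1, the sum then being empty. -/

import Mathlib

open Finset

noncomputable def Pden (a : ℕ → ℂ) (n : ℕ) (z : ℂ) : ℂ := ∏ j ∈ Finset.Icc 1 n, (z - a j)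

lemma pden_ne_zero {a : ℕ → ℂ} {n : ℕ} {z : ℂ} (h : ∀ j ∈ Finset.Icc 1 n, z - a j ≠ 0) :
    Pden a n z ≠ 0 :=
  Finset.prod_ne_zero_iff.2 h

lemma pden_diff {a : ℕ → ℂ} {n : ℕ} {z : ℂ} (h : ∀ j ∈ Finset.Icc 1 n, z - a j ≠ 0) :
    DifferentiableAt ℂ (fun z => (Pden a n z)⁻¹) z := by
  refine DifferentiableAt.inv ?_ (pden_ne_zero h)
  exact DifferentiableAt.fun_finsetProd fun i _ => (differentiableAt_id.sub_const _)

lemma sphere_ne {c : ℂ} {R : ℝ} {w z : ℂ} (hz : z ∈ Metric.sphere c R)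
    (hw : ‖w - c‖ ≠ R) : z - w ≠ 0 := by
  intro h
  rw [sub_eq_zero] at h
  apply hw
  rw [← h]
  simpa [Complex.dist_eq] using hz

lemma closedBall_ne {c : ℂ} {R : ℝ} {w z : ℂ} (hz : z ∈ Metric.closedBall c R)
    (hw : R < ‖w - c‖) : z - w ≠ 0 := by
  intro h
  rw [sub_eq_zero] at h
  subst h
  rw [Metric.mem_closedBall, Complex.dist_eq] at hz
  linarith

lemma L1 {a : ℕ → ℂ} {n : ℕ} {c : ℂ} {R : ℝ} (hR : 0 < R)
    (h : ∀ j ∈ Finset.Icc 1 n, R < ‖a j - c‖) :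
    circleIntegral (fun z => (Pden a n z)⁻¹) c R = 0 := by
  have hd : ∀ z ∈ Metric.closedBall c R,
      DifferentiableAt ℂ (fun z => (Pden a n z)⁻¹) z := fun z hz =>
    pden_diff fun j hj => closedBall_ne hz (h j hj)
  exact Complex.circleIntegral_eq_zero_of_differentiable_on_off_countable hR.le Set.countable_empty
    (fun z hz => (hd z hz).continuousAt.continuousWithinAt)
    (fun z hz => hd z (Metric.ball_subset_closedBall hz.1))

lemma pointwise_pf {a : ℕ → ℂ} {s : ℕ} {z : ℂ}
    (hz : ∀ j ∈ Finset.Icc 1 (s + 1), z - a j ≠ 0) (h1 : a 1 - a (s + 1) ≠ 0) :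
    (Pden a (s + 1) z)⁻¹
      = (a 1 - a (s + 1))⁻¹ * ((Pden a s z)⁻¹ - (Pden (fun j => a (j + 1)) s z)⁻¹) := by
  have e1 : Pden a (s + 1) z = Pden a s z * (z - a (s + 1)) := by
    rw [Pden, Finset.prod_Icc_succ_top (by omega)]; rfl
  have e2 : Pden (fun j => a (j + 1)) s z = ∏ j ∈ Finset.Icc 2 (s + 1), (z - a j) := by
    rw [Pden, show (2 : ℕ) = 1 + 1 from rfl, show s + 1 = s + 1 from rfl,
      ← Finset.map_add_right_Icc, Finset.prod_map]
    rfl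
  have e3 : Pden a (s + 1) z = (z - a 1) * Pden (fun j => a (j + 1)) s z := by
    rw [e2, Pden, show Finset.Icc 1 (s + 1) = Finset.Ico 1 (s + 2) from by
        rw [← Finset.Ico_add_one_right_eq_Icc]; rfl,
      Finset.prod_eq_prod_Ico_succ_bot (by omega)]
    rw [show Finset.Ico 2 (s + 2) = Finset.Icc 2 (s + 1) from by rw [← Finset.Ico_add_one_right_eq_Icc]; rfl]
  have hx : z - a 1 ≠ 0 := hz 1 (by simp)
  have hy : z - a (s + 1) ≠ 0 := hz (s + 1) (by simp)
  have hPs : Pden a s z ≠ 0 := pden_ne_zero fun j hj => by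
    refine hz j ?_
    simp only [Finset.mem_Icc] at hj ⊢
    omega
  have hQ : Pden (fun j => a (j + 1)) s z ≠ 0 := by
    rw [e2]
    refine Finset.prod_ne_zero_iff.2 fun j hj => ?_
    refine hz j ?_
    simp only [Finset.mem_Icc] at hj ⊢
    omega
  have rel : (z - a 1) * Pden (fun j => a (j + 1)) s z = Pden a s z * (z - a (s + 1)) := by
    rw [← e3, e1]
  have key : (Pden a s z)⁻¹ - (Pden (fun j => a (j + 1)) s z)⁻¹
      = (a 1 - a (s + 1)) * (Pden a s z * (z - a (s + 1)))⁻¹ := by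
    field_simp
    ring_nf
    ring_nf at rel
    linear_combination rel
  rw [e1, key, ← mul_assoc, inv_mul_cancel₀ h1, one_mul]

lemma circleIntegrable_pinv {a : ℕ → ℂ} {n : ℕ} {c : ℂ} {R : ℝ} (hR : 0 ≤ R)
    (h : ∀ j ∈ Finset.Icc 1 n, ‖a j - c‖ ≠ R) :
    CircleIntegrable (fun z => (Pden a n z)⁻¹) c R := by
  refine ContinuousOn.circleIntegrable hR fun z hz => ?_
  exact (pden_diff fun j hj => sphere_ne hz (h j hj)).continuousAt.continuousWithinAt

lemma L4 {a : ℕ → ℂ} {s : ℕ} {c : ℂ} {R : ℝ} (hR : 0 < R)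
    (hne : ∀ j ∈ Finset.Icc 1 (s + 1), ‖a j - c‖ ≠ R)
    (h1 : a 1 - a (s + 1) ≠ 0) :
    circleIntegral (fun z => (Pden a (s + 1) z)⁻¹) c R
      = (a 1 - a (s + 1))⁻¹ *
        (circleIntegral (fun z => (Pden a s z)⁻¹) c R
          - circleIntegral (fun z => (Pden (fun j => a (j + 1)) s z)⁻¹) c R) := by
  have hint1 : CircleIntegrable (fun z => (Pden a s z)⁻¹) c R := by
    refine circleIntegrable_pinv hR.le fun j hj => hne j ?_
    simp only [Finset.mem_Icc] at hj ⊢; omega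
  have hint2 : CircleIntegrable (fun z => (Pden (fun j => a (j + 1)) s z)⁻¹) c R := by
    refine circleIntegrable_pinv hR.le fun j hj => hne (j + 1) ?_
    simp only [Finset.mem_Icc] at hj ⊢; omega
  have congr1 : circleIntegral (fun z => (Pden a (s + 1) z)⁻¹) c R
      = circleIntegral (fun z =>
          (a 1 - a (s + 1))⁻¹ • ((Pden a s z)⁻¹ - (Pden (fun j => a (j + 1)) s z)⁻¹)) c R := by
    refine circleIntegral.integral_congr hR.le fun z hz => ?_
    exact pointwise_pf (fun j hj => sphere_ne hz (hne j hj)) h1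
  rw [congr1, circleIntegral.integral_smul, circleIntegral.integral_sub hint1 hint2]
  simp [smul_eq_mul]

lemma L2 {a : ℕ → ℂ} {n : ℕ} {c : ℂ} {R : ℝ} (hR : 0 < R) (hn : 2 ≤ n)
    (h : ∀ j ∈ Finset.Icc 1 n, ‖a j - c‖ < R) :
    circleIntegral (fun z => (Pden a n z)⁻¹) c R = 0 := by
  set f : ℂ → ℂ := fun z => (Pden a n z)⁻¹ with hf
  have hannne : ∀ r : ℝ, ∀ z ∈ Metric.closedBall c r \ Metric.ball c R,
      ∀ j ∈ Finset.Icc 1 n, z - a j ≠ 0 := by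
    intro r z hz j hj hzero
    rw [sub_eq_zero] at hzero
    subst hzero
    exact hz.2 (by simpa [Metric.mem_ball, Complex.dist_eq] using h j hj)
  have hconst : ∀ r : ℝ, R ≤ r → circleIntegral f c r = circleIntegral f c R := by
    intro r hr
    refine Complex.circleIntegral_eq_of_differentiable_on_annulus_off_countable hR hr
      Set.countable_empty (fun z hz => ?_) (fun z hz => ?_)
    · exact (pden_diff (hannne r z hz)).continuousAt.continuousWithinAt
    · refine pden_diff (hannne r z ?_)
      exact ⟨Metric.ball_subset_closedBall hz.1.1, fun hm => hz.1.2 (Metric.ball_subset_closedBall hm)⟩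
  have hbound : ∀ r : ℝ, max (2 * R) 2 ≤ r →
      ‖circleIntegral f c R‖ ≤ 8 * Real.pi / r := by
    intro r hr
    have hr2 : (2 : ℝ) ≤ r := le_trans (le_max_right _ _) hr
    have hrR : 2 * R ≤ r := le_trans (le_max_left _ _) hr
    have hrpos : 0 < r := by linarith
    rw [← hconst r (by linarith)]
    have hC : ∀ z ∈ Metric.sphere c r, ‖f z‖ ≤ ((r / 2)⁻¹) ^ 2 := by
      intro z hz
      have hzc : dist z c = r := Metric.mem_sphere.1 hz
      have hprod : (r / 2) ^ n ≤ ‖Pden a n z‖ := by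
        rw [Pden, norm_prod]
        calc (r / 2) ^ n = ∏ _j ∈ Finset.Icc 1 n, (r / 2) := by
              rw [Finset.prod_const, Nat.card_Icc]
              norm_num
        _ ≤ ∏ j ∈ Finset.Icc 1 n, ‖z - a j‖ := by
              refine Finset.prod_le_prod (fun i _ => by linarith) fun j hj => ?_
              have h1 : dist z c ≤ dist z (a j) + dist (a j) c := dist_triangle _ _ _
              have h2 : dist (a j) c < R := by
                simpa [Complex.dist_eq] using h j hj
              have h3 : dist z (a j) = ‖z - a j‖ := Complex.dist_eq _ _
              rw [← h3]
              linarith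
      have habs : ‖f z‖ = (‖Pden a n z‖)⁻¹ := by
        simp [hf, map_inv₀]
      rw [habs]
      calc (‖Pden a n z‖)⁻¹ ≤ ((r / 2) ^ n)⁻¹ := by
            refine inv_anti₀ (by positivity) hprod
      _ = ((r / 2)⁻¹) ^ n := by rw [inv_pow]
      _ ≤ ((r / 2)⁻¹) ^ 2 := by
            refine pow_le_pow_of_le_one (by positivity) ?_ hn
            rw [inv_le_one_iff₀]
            right
            linarith
    have := circleIntegral.norm_integral_le_of_norm_le_const (le_of_lt hrpos) hC
    refine le_trans this (le_of_eq ?_)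
    field_simp
    ring
  have hlim : Filter.Tendsto (fun r : ℝ => 8 * Real.pi / r) Filter.atTop (nhds 0) :=
    Filter.Tendsto.div_atTop tendsto_const_nhds Filter.tendsto_id
  have hle : ‖circleIntegral f c R‖ ≤ 0 := by
    refine ge_of_tendsto hlim ?_
    exact Filter.eventually_atTop.2 ⟨max (2 * R) 2, hbound⟩
  simpa using norm_le_zero_iff.1 hle


def Msum {T : ℕ} (m : Fin T → ℕ) (k : ℕ) : ℕ :=
  ∑ q' ∈ Finset.univ.filter (fun q' : Fin T => (q' : ℕ) < k), (m q' - 1)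

noncomputable def pw (s T : ℕ) (a : ℕ → ℂ) (m : Fin T → ℕ) : ℂ :=
  ∏ q ∈ Finset.range T,
    ∏ j ∈ Finset.Icc ((s + 1) - Msum m (q + 1)) ((s + 1) - Msum m q), (a (q + 1) - a j)⁻¹

noncomputable def Csum (s T : ℕ) (a : ℕ → ℂ) : ℂ :=
  ∑ m ∈ (Finset.Nat.antidiagonalTuple T s).filter (fun m => ∀ q, 1 ≤ m q), pw s T a m

lemma Msum_zero {T : ℕ} (m : Fin T → ℕ) : Msum m 0 = 0 := by simp [Msum]

lemma Msum_cons {T : ℕ} (m0 : ℕ) (mt : Fin T → ℕ) (k : ℕ) :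
    Msum (Fin.cons m0 mt) (k + 1) = (m0 - 1) + Msum mt k := by
  simp [Msum, Finset.sum_filter, Fin.sum_univ_succ, Nat.succ_lt_succ_iff]

lemma Csum_zero_zero (a : ℕ → ℂ) : Csum 0 0 a = 1 := by
  simp [Csum, Finset.Nat.antidiagonalTuple_zero_zero, pw]

lemma pw_cons_big (s T : ℕ) (a : ℕ → ℂ) (k : ℕ) (mt : Fin T → ℕ) :
    pw (s + 1) (T + 1) a (Fin.cons (k + 2) mt)
      = (a 1 - a (s + 2))⁻¹ * pw s (T + 1) a (Fin.cons (k + 1) mt) := by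
  unfold pw
  rw [Finset.prod_range_succ', Finset.prod_range_succ']
  simp only [Msum_cons, Msum_zero, Nat.sub_zero, zero_add, add_zero]
  have main : (∏ x ∈ Finset.range T,
        ∏ j ∈ Finset.Icc ((s + 1 + 1) - ((k + 2 - 1) + Msum mt (x + 1)))
          ((s + 1 + 1) - ((k + 2 - 1) + Msum mt x)), (a (x + 1 + 1) - a j)⁻¹)
      = ∏ x ∈ Finset.range T,
        ∏ j ∈ Finset.Icc ((s + 1) - ((k + 1 - 1) + Msum mt (x + 1)))
          ((s + 1) - ((k + 1 - 1) + Msum mt x)), (a (x + 1 + 1) - a j)⁻¹ := by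
    refine Finset.prod_congr rfl fun q _ => ?_
    rw [show (s + 1 + 1) - ((k + 2 - 1) + Msum mt (q + 1))
          = (s + 1) - ((k + 1 - 1) + Msum mt (q + 1)) from by omega,
        show (s + 1 + 1) - ((k + 2 - 1) + Msum mt q)
          = (s + 1) - ((k + 1 - 1) + Msum mt q) from by omega]
  rw [main]
  have f0 : (∏ j ∈ Finset.Icc ((s + 1 + 1) - (k + 2 - 1)) (s + 1 + 1), (a 1 - a j)⁻¹)
      = (∏ j ∈ Finset.Icc ((s + 1) - (k + 1 - 1)) (s + 1), (a 1 - a j)⁻¹)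
          * (a 1 - a (s + 2))⁻¹ := by
    rw [show (s + 1 + 1) - (k + 2 - 1) = (s + 1) - (k + 1 - 1) from by omega]
    rw [Finset.prod_Icc_succ_top (by omega)]
  rw [f0]
  ring

lemma prod_Icc_shift (u v : ℕ) (g : ℕ → ℂ) :
    ∏ j ∈ Finset.Icc (u + 1) (v + 1), g j = ∏ j ∈ Finset.Icc u v, g (j + 1) := by
  rw [← Finset.map_add_right_Icc, Finset.prod_map]
  rfl

lemma pw_cons_one (s T : ℕ) (a : ℕ → ℂ) (mt : Fin T → ℕ) (hmt : ∀ k, Msum mt k ≤ s) :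
    pw (s + 1) (T + 1) a (Fin.cons 1 mt)
      = (a 1 - a (s + 2))⁻¹ * pw s T (fun j => a (j + 1)) mt := by
  unfold pw
  rw [Finset.prod_range_succ']
  simp only [Msum_cons, Msum_zero, Nat.sub_zero, Nat.sub_self, zero_add, add_zero,
    Finset.Icc_self, Finset.prod_singleton]
  rw [mul_comm]
  congr 1
  refine Finset.prod_congr rfl fun q _ => ?_
  rw [show (s + 1 + 1) - Msum mt (q + 1) = ((s + 1) - Msum mt (q + 1)) + 1 from by
      have := hmt (q + 1); omega,
    show (s + 1 + 1) - Msum mt q = ((s + 1) - Msum mt q) + 1 from by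
      have := hmt q; omega]
  rw [prod_Icc_shift]

lemma Msum_le_sum {T : ℕ} (m : Fin T → ℕ) (k : ℕ) : Msum m k ≤ ∑ q', m q' := by
  calc Msum m k ≤ ∑ q' ∈ Finset.univ.filter (fun q' : Fin T => (q' : ℕ) < k), m q' :=
        Finset.sum_le_sum fun i _ => Nat.sub_le _ _
  _ ≤ ∑ q', m q' := Finset.sum_le_sum_of_subset (Finset.filter_subset _ _)

lemma Csum_rec (s T : ℕ) (a : ℕ → ℂ) :
    Csum (s + 1) (T + 1) a
      = (a 1 - a (s + 2))⁻¹ * (Csum s (T + 1) a + Csum s T (fun j => a (j + 1))) := by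
  unfold Csum
  rw [← Finset.sum_filter_add_sum_filter_not
    ((Finset.Nat.antidiagonalTuple (T + 1) (s + 1)).filter (fun m => ∀ q, 1 ≤ m q))
    (fun m => m 0 = 1)]
  have hA : ∑ m ∈ (((Finset.Nat.antidiagonalTuple (T + 1) (s + 1)).filter
        (fun m => ∀ q, 1 ≤ m q)).filter (fun m => m 0 = 1)), pw (s + 1) (T + 1) a m
      = ∑ mt ∈ (Finset.Nat.antidiagonalTuple T s).filter (fun m => ∀ q, 1 ≤ m q),
          (a 1 - a (s + 2))⁻¹ * pw s T (fun j => a (j + 1)) mt := by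
    refine Finset.sum_nbij' Fin.tail (fun mt => Fin.cons 1 mt) ?_ ?_ ?_ ?_ ?_
    · intro m hm
      simp only [Finset.mem_filter, Finset.Nat.mem_antidiagonalTuple] at hm ⊢
      obtain ⟨⟨hsum, hpos⟩, h0⟩ := hm
      rw [Fin.sum_univ_succ, h0] at hsum
      have ht : (∑ i : Fin T, Fin.tail m i) = ∑ i : Fin T, m i.succ := rfl
      exact ⟨by omega, fun q => hpos q.succ⟩
    · intro mt hmt
      simp only [Finset.mem_filter, Finset.Nat.mem_antidiagonalTuple] at hmt ⊢
      obtain ⟨hsum, hpos⟩ := hmt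
      refine ⟨⟨?_, fun q => ?_⟩, Fin.cons_zero _ _⟩
      · rw [Fin.sum_univ_succ]
        simp only [Fin.cons_zero, Fin.cons_succ]
        omega
      · cases q using Fin.cases with
        | zero => simp
        | succ i => simpa using hpos i
    · intro m hm
      simp only [Finset.mem_filter] at hm
      have h0 : m 0 = 1 := hm.2
      show Fin.cons 1 (Fin.tail m) = m
      conv_rhs => rw [← Fin.cons_self_tail m, h0]
    · intro mt _
      exact Fin.tail_cons _ _
    · intro m hm
      simp only [Finset.mem_filter, Finset.Nat.mem_antidiagonalTuple] at hm
      obtain ⟨⟨hsum, hpos⟩, h0⟩ := hm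
      have hmt : ∀ k, Msum (Fin.tail m) k ≤ s := by
        intro k
        refine le_trans (Msum_le_sum _ _) ?_
        rw [Fin.sum_univ_succ, h0] at hsum
        have ht : (∑ i : Fin T, Fin.tail m i) = ∑ i : Fin T, m i.succ := rfl
        omega
      conv_lhs => rw [← Fin.cons_self_tail m, h0]
      exact pw_cons_one s T a (Fin.tail m) hmt
  have hB : ∑ m ∈ (((Finset.Nat.antidiagonalTuple (T + 1) (s + 1)).filter
        (fun m => ∀ q, 1 ≤ m q)).filter (fun m => ¬ m 0 = 1)), pw (s + 1) (T + 1) a m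
      = ∑ m ∈ (Finset.Nat.antidiagonalTuple (T + 1) s).filter (fun m => ∀ q, 1 ≤ m q),
          (a 1 - a (s + 2))⁻¹ * pw s (T + 1) a m := by
    refine Finset.sum_nbij' (fun m => Fin.cons (m 0 - 1) (Fin.tail m))
      (fun m => Fin.cons (m 0 + 1) (Fin.tail m)) ?_ ?_ ?_ ?_ ?_
    · intro m hm
      simp only [Finset.mem_filter, Finset.Nat.mem_antidiagonalTuple] at hm ⊢
      obtain ⟨⟨hsum, hpos⟩, h0⟩ := hm
      have h2 : 2 ≤ m 0 := by have := hpos 0; omega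
      rw [Fin.sum_univ_succ] at hsum
      constructor
      · rw [Fin.sum_univ_succ]
        simp only [Fin.cons_zero, Fin.cons_succ]
        have ht : (∑ i : Fin T, Fin.tail m i) = ∑ i : Fin T, m i.succ := rfl
        omega
      · intro q
        cases q using Fin.cases with
        | zero => simpa using by omega
        | succ i => simpa [Fin.tail] using hpos i.succ
    · intro m hm
      simp only [Finset.mem_filter, Finset.Nat.mem_antidiagonalTuple] at hm ⊢
      obtain ⟨hsum, hpos⟩ := hm
      rw [Fin.sum_univ_succ] at hsum
      refine ⟨⟨?_, fun q => ?_⟩, ?_⟩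
      · rw [Fin.sum_univ_succ]
        simp only [Fin.cons_zero, Fin.cons_succ]
        have ht : (∑ i : Fin T, Fin.tail m i) = ∑ i : Fin T, m i.succ := rfl
        omega
      · cases q using Fin.cases with
        | zero => simp
        | succ i => simpa [Fin.tail] using hpos i.succ
      · have := hpos 0
        simp only [Fin.cons_zero]
        omega
    · intro m hm
      simp only [Finset.mem_filter, Finset.Nat.mem_antidiagonalTuple] at hm
      have h2 : 2 ≤ m 0 := by have := hm.1.2 0; have := hm.2; omega
      show Fin.cons ((Fin.cons (m 0 - 1) (Fin.tail m)) 0 + 1)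
        (Fin.tail (Fin.cons (m 0 - 1) (Fin.tail m))) = m
      simp only [Fin.cons_zero, Fin.tail_cons]
      rw [show m 0 - 1 + 1 = m 0 from by omega]
      exact Fin.cons_self_tail m
    · intro m hm
      show Fin.cons ((Fin.cons (m 0 + 1) (Fin.tail m)) 0 - 1)
        (Fin.tail (Fin.cons (m 0 + 1) (Fin.tail m))) = m
      simp only [Fin.cons_zero, Fin.tail_cons, Nat.add_sub_cancel]
      exact Fin.cons_self_tail m
    · intro m hm
      simp only [Finset.mem_filter, Finset.Nat.mem_antidiagonalTuple] at hm
      have h2 : 2 ≤ m 0 := by have := hm.1.2 0; have := hm.2; omega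
      obtain ⟨k, hk⟩ : ∃ k, m 0 = k + 2 := ⟨m 0 - 2, by omega⟩
      conv_lhs => rw [← Fin.cons_self_tail m, hk]
      show _ = (a 1 - a (s + 2))⁻¹ * pw s (T + 1) a (Fin.cons (m 0 - 1) (Fin.tail m))
      rw [hk, show k + 2 - 1 = k + 1 from by omega]
      exact pw_cons_big s T a k (Fin.tail m)
  rw [hA, hB, ← Finset.mul_sum, ← Finset.mul_sum]
  ring


lemma Csum_s_zero (s : ℕ) (a : ℕ → ℂ) : Csum (s + 1) 0 a = 0 := by
  simp [Csum, Finset.Nat.antidiagonalTuple_zero_succ]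

lemma Csum_eq_zero_of_lt {s T : ℕ} (h : s < T) (a : ℕ → ℂ) : Csum s T a = 0 := by
  refine Finset.sum_eq_zero fun m hm => absurd ?_ (by omega : ¬ T ≤ s)
  rw [Finset.mem_filter, Finset.Nat.mem_antidiagonalTuple] at hm
  calc T = ∑ _q : Fin T, 1 := by simp
  _ ≤ ∑ q, m q := Finset.sum_le_sum fun i _ => hm.2 i
  _ = s := hm.1

lemma key (s : ℕ) (hs : 1 ≤ s) : ∀ T ≤ s + 1, ∀ (a : ℕ → ℂ) (c : ℂ) (R : ℝ), 0 < R →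
    (∀ j, 1 ≤ j → j ≤ T → ‖a j - c‖ < R) →
    (∀ j, T + 1 ≤ j → j ≤ s + 1 → R < ‖a j - c‖) →
    (1 / (2 * (Real.pi : ℂ) * Complex.I)) * circleIntegral (fun z => (Pden a (s + 1) z)⁻¹) c R
      = (-1 : ℂ) ^ (T + 1) * Csum s T a := by
  induction s, hs using Nat.le_induction with
  | base =>
    intro T hT a c R hR hin hout
    interval_cases T
    · rw [L1 hR (fun j hj => hout j (by simp at hj; omega) (by simp at hj; omega)),
        Csum_s_zero]
      ring
    · have h2pi : (2 * (Real.pi : ℂ) * Complex.I) ≠ 0 := by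
        simp [Real.pi_ne_zero, Complex.I_ne_zero, Complex.ofReal_ne_zero]
      have hne : ∀ j ∈ Finset.Icc 1 (1 + 1), ‖a j - c‖ ≠ R := by
        intro j hj
        simp only [Finset.mem_Icc] at hj
        rcases (by omega : j = 1 ∨ j = 2) with rfl | rfl
        · exact ne_of_lt (hin 1 le_rfl le_rfl)
        · exact ne_of_gt (hout 2 le_rfl le_rfl)
      have h1 : a 1 - a (1 + 1) ≠ 0 := by
        refine sub_ne_zero.2 fun heq => ?_
        have h1a := hin 1 le_rfl le_rfl
        have h2a := hout 2 le_rfl le_rfl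
        rw [heq, show (1 : ℕ) + 1 = 2 from rfl] at h1a
        linarith
      have hIn : circleIntegral (fun z => (Pden a 1 z)⁻¹) c R
          = 2 * Real.pi * Complex.I := by
        have he : (fun z : ℂ => (Pden a 1 z)⁻¹) = fun z => (z - a 1)⁻¹ := by
          funext z; rw [Pden]; simp
        rw [he]
        exact circleIntegral.integral_sub_inv_of_mem_ball
          (by rw [Metric.mem_ball, Complex.dist_eq]; exact hin 1 le_rfl le_rfl)
      have hOut : circleIntegral (fun z => (Pden (fun j => a (j + 1)) 1 z)⁻¹) c R = 0 := by
        refine L1 hR fun j hj => ?_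
        simp only [Finset.mem_Icc] at hj
        have : j = 1 := by omega
        subst this
        exact hout 2 le_rfl le_rfl
      rw [L4 hR hne h1, hIn, hOut,
        show (1 : ℕ) + 1 = 0 + 2 from rfl, Csum_rec 0 0 a,
        Csum_eq_zero_of_lt (by norm_num), Csum_zero_zero]
      field_simp
      ring
    · rw [L2 hR le_rfl (fun j hj => hin j (by simp at hj; omega) (by simp at hj; omega)),
        Csum_eq_zero_of_lt (by norm_num)]
      ring
  | succ s hs ih =>
    intro T hT a c R hR hin hout
    rcases (by omega : T = 0 ∨ T = s + 2 ∨ (1 ≤ T ∧ T ≤ s + 1)) with rfl | rfl | ⟨hT1, hT2⟩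
    · rw [L1 hR (fun j hj => hout j (by simp at hj; omega) (by simp at hj; omega)),
        Csum_s_zero]
      ring
    · rw [L2 hR (by omega) (fun j hj => hin j (by simp at hj; omega) (by simp at hj; omega)),
        Csum_eq_zero_of_lt (by omega)]
      ring
    · obtain ⟨T', rfl⟩ : ∃ T', T = T' + 1 := ⟨T - 1, by omega⟩
      have hne : ∀ j ∈ Finset.Icc 1 (s + 1 + 1), ‖a j - c‖ ≠ R := by
        intro j hj
        simp only [Finset.mem_Icc] at hj
        by_cases hle : j ≤ T' + 1
        · exact ne_of_lt (hin j hj.1 hle)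
        · exact ne_of_gt (hout j (by omega) (by omega))
      have h1 : a 1 - a (s + 1 + 1) ≠ 0 := by
        refine sub_ne_zero.2 fun heq => ?_
        have h1a := hin 1 le_rfl (by omega)
        have h2a := hout (s + 2) (by omega) (by omega)
        rw [heq, show s + 1 + 1 = s + 2 from rfl] at h1a
        linarith
      have IH1 := ih (T' + 1) (by omega) a c R hR
        (fun j h1j h2j => hin j h1j h2j)
        (fun j h1j h2j => hout j h1j (by omega))
      have IH2 := ih T' (by omega) (fun j => a (j + 1)) c R hR
        (fun j h1j h2j => hin (j + 1) (by omega) (by omega))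
        (fun j h1j h2j => hout (j + 1) (by omega) (by omega))
      rw [L4 hR hne h1, show s + 1 + 1 = s + 2 from rfl, Csum_rec s T' a]
      linear_combination ((a 1 - a (s + 2))⁻¹ : ℂ) * IH1 - ((a 1 - a (s + 2))⁻¹ : ℂ) * IH2

/-- Lemma 7.3: combinatorial evaluation of the contour integral
`(2πi)⁻¹ ∮ dz / ∏_{j=1}^{s+1} (z − a_j)` as a signed sum over compositions. -/
theorem contour_integral_composition_expansion
    (s T : ℕ) (hs : 1 ≤ s) (hT : T ≤ s + 1)
    (c : ℂ) (R : ℝ) (hR : 0 < R)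
    (a : ℕ → ℂ)
    (hin : ∀ j, 1 ≤ j → j ≤ T → ‖a j - c‖ < R)
    (hout : ∀ j, T + 1 ≤ j → j ≤ s + 1 → R < ‖a j - c‖) :
    (1 / (2 * (Real.pi : ℂ) * Complex.I)) *
      circleIntegral (fun z => (∏ j ∈ Finset.Icc 1 (s + 1), (z - a j))⁻¹) c R =
    (-1 : ℂ) ^ (T + 1) *
      ∑ m ∈ (Finset.Nat.antidiagonalTuple T s).filter (fun m => ∀ q, 1 ≤ m q),
        ∏ q ∈ Finset.range T,
          ∏ j ∈ Finset.Icc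
              ((s + 1) -
                ∑ q' ∈ Finset.univ.filter (fun q' : Fin T => (q' : ℕ) < q + 1),
                  (m q' - 1))
              ((s + 1) -
                ∑ q' ∈ Finset.univ.filter (fun q' : Fin T => (q' : ℕ) < q),
                  (m q' - 1)),
            (a (q + 1) - a j)⁻¹ := by
  exact key s hs T hT a c R hR hin hout
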